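/- If P is a complex polynomial of degree n ≥ 1 having all its zeros in the closed unit disk D = {z : |z| ≤ 1}, then the sup norm of P' on D is at least (n/2) times the sup norm of P on D. -/

import Mathlib

open Polynomial Set

private lemma half_re_lemma {z r : ℂ} (hz : ‖z‖ = 1) (hr : ‖r‖ ≤ 1) :
    ‖z - r‖ ^ 2 / 2 ≤ (z * (starRingEnd ℂ) (z - r)).re := by
  have h1 : ‖z‖ ^ 2 = Complex.normSq z := Complex.sq_norm z
  have h2 : ‖r‖ ^ 2 = Complex.normSq r := Complex.sq_norm r
  have h3 : ‖z - r‖ ^ 2 = Complex.normSq (z - r) := Complex.sq_norm (z - r)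
  have hr2 : ‖r‖ ^ 2 ≤ 1 := by nlinarith [norm_nonneg r]
  simp only [Complex.normSq_apply, Complex.mul_re, Complex.conj_re, Complex.conj_im,
    Complex.sub_re, Complex.sub_im] at h1 h2 h3 ⊢
  nlinarith [hz, hr2, h1, h2, h3]

private lemma turan_key (z : ℂ) (hz : ‖z‖ = 1) : ∀ (R : Multiset ℂ),
    (∀ r ∈ R, ‖r‖ ≤ 1) →
    (R.card / 2 : ℝ) * ‖((R.map (fun r => X - C r)).prod).eval z‖ ^ 2 ≤
      (z * (derivative ((R.map (fun r => X - C r)).prod)).eval z *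
        (starRingEnd ℂ) (((R.map (fun r => X - C r)).prod).eval z)).re := by
  intro R
  induction R using Multiset.induction_on with
  | empty => simp
  | cons r S ih =>
    intro hR
    have hr : ‖r‖ ≤ 1 := hR r (Multiset.mem_cons_self r S)
    have hS : ∀ s ∈ S, ‖s‖ ≤ 1 := fun s hs => hR s (Multiset.mem_cons_of_mem hs)
    have IH := ih hS
    set Q : Polynomial ℂ := ((S.map (fun r => X - C r)).prod) with hQ
    set u : ℂ := z - r with hu
    set w : ℂ := Q.eval z with hw
    set w' : ℂ := (derivative Q).eval z with hw'
    have hprod : ((r ::ₘ S).map (fun r => X - C r)).prod = (X - C r) * Q := by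
      rw [Multiset.map_cons, Multiset.prod_cons]
    rw [hprod, derivative_mul, derivative_X_sub_C, one_mul]
    have heval : ((X - C r) * Q).eval z = u * w := by simp [hu, hw]
    have heval' : (Q + (X - C r) * derivative Q).eval z = w + u * w' := by
      simp [hu, hw, hw']
    rw [heval, heval']
    have hexp : z * (w + u * w') * (starRingEnd ℂ) (u * w)
        = (z * (starRingEnd ℂ) u) * ((w : ℂ) * (starRingEnd ℂ) w)
          + (u * (starRingEnd ℂ) u) * (z * w' * (starRingEnd ℂ) w) := by
      rw [map_mul]; ring
    rw [hexp]
    have hww : (w : ℂ) * (starRingEnd ℂ) w = (Complex.normSq w : ℂ) := Complex.mul_conj w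
    have huu : (u : ℂ) * (starRingEnd ℂ) u = (Complex.normSq u : ℂ) := Complex.mul_conj u
    rw [hww, huu, Complex.add_re]
    have h1 : ((z * (starRingEnd ℂ) u) * (Complex.normSq w : ℂ)).re
        = (z * (starRingEnd ℂ) u).re * Complex.normSq w := by
      rw [mul_comm, Complex.re_ofReal_mul]; ring
    have h2 : (((Complex.normSq u : ℂ)) * (z * w' * (starRingEnd ℂ) w)).re
        = Complex.normSq u * (z * w' * (starRingEnd ℂ) w).re := Complex.re_ofReal_mul _ _
    rw [h1, h2]
    have hhalf : ‖u‖ ^ 2 / 2 ≤ (z * (starRingEnd ℂ) u).re := half_re_lemma hz hr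
    have hnormuw : ‖u * w‖ ^ 2 = ‖u‖ ^ 2 * ‖w‖ ^ 2 := by rw [norm_mul]; ring
    have hnsu : Complex.normSq u = ‖u‖ ^ 2 := (Complex.sq_norm u).symm
    have hnsw : Complex.normSq w = ‖w‖ ^ 2 := (Complex.sq_norm w).symm
    have hcard : ((r ::ₘ S).card : ℝ) = (S.card : ℝ) + 1 := by
      rw [Multiset.card_cons]; push_cast; ring
    rw [hcard, hnormuw, hnsu, hnsw]
    have hu2 : (0:ℝ) ≤ ‖u‖ ^ 2 := sq_nonneg _
    have hw2 : (0:ℝ) ≤ ‖w‖ ^ 2 := sq_nonneg _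
    nlinarith [IH, hhalf, hu2, hw2]

theorem turan_disk (P : Polynomial ℂ) (n : ℕ) (hn : 1 ≤ n) (hdeg : P.natDegree = n)
    (hz : ∀ z : ℂ, P.IsRoot z → ‖z‖ ≤ 1) :
    (n / 2 : ℝ) * (⨆ z : Metric.closedBall (0:ℂ) 1, ‖P.eval (z : ℂ)‖) ≤
      ⨆ z : Metric.closedBall (0:ℂ) 1, ‖(Polynomial.derivative P).eval (z : ℂ)‖ := by
  have hP0 : P ≠ 0 := by
    intro h
    rw [h, natDegree_zero] at hdeg
    omega
  -- maximum modulus: max of ‖P‖ on closed ball attained on sphere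
  obtain ⟨z₀, hz₀f, hz₀max⟩ := Complex.exists_mem_frontier_isMaxOn_norm
    (Metric.isBounded_ball (x := (0:ℂ)) (r := 1)) (Metric.nonempty_ball.2 one_pos)
    ((P.differentiable).diffContOnCl)
  rw [frontier_ball (0:ℂ) one_ne_zero] at hz₀f
  have hz₀norm : ‖z₀‖ = 1 := by
    simpa using (mem_sphere_zero_iff_norm.mp hz₀f)
  have hcl : closure (Metric.ball (0:ℂ) 1) = Metric.closedBall (0:ℂ) 1 :=
    closure_ball (0:ℂ) one_ne_zero
  rw [hcl] at hz₀max
  have hz₀mem : z₀ ∈ Metric.closedBall (0:ℂ) 1 := by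
    rw [Metric.mem_closedBall]
    simpa [Complex.dist_eq] using le_of_eq hz₀norm
  -- factor P over its roots
  have hsplits : P.Splits := IsAlgClosed.splits P
  have hfact := hsplits.eq_prod_roots
  have hcard : P.roots.card = n := by
    rw [← hdeg]; exact (Polynomial.splits_iff_card_roots.mp hsplits)
  have hroots : ∀ r ∈ P.roots, ‖r‖ ≤ 1 := by
    intro r hr
    exact hz r ((Polynomial.mem_roots'.mp hr).2)
  -- key inequality at z₀
  have hkey := turan_key z₀ hz₀norm P.roots hroots
  rw [hcard] at hkey
  set a : ℂ := P.leadingCoeff with ha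
  set Q : Polynomial ℂ := ((P.roots.map (fun r => X - C r)).prod) with hQdef
  have hPeval : ∀ w : ℂ, P.eval w = a * Q.eval w := by
    intro w; conv_lhs => rw [hfact]
    simp [hQdef]
  have hPdeval : ∀ w : ℂ, (derivative P).eval w = a * (derivative Q).eval w := by
    intro w; conv_lhs => rw [hfact]
    rw [derivative_mul, derivative_C, zero_mul, zero_add]
    simp [hQdef]
  -- transfer key inequality from Q to P
  have hPkey : (n / 2 : ℝ) * ‖P.eval z₀‖ ^ 2 ≤
      (z₀ * (derivative P).eval z₀ * (starRingEnd ℂ) (P.eval z₀)).re := by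
    rw [hPeval z₀, hPdeval z₀, map_mul]
    have hexp : z₀ * (a * (derivative Q).eval z₀) * ((starRingEnd ℂ) a *
        (starRingEnd ℂ) (Q.eval z₀))
        = (a * (starRingEnd ℂ) a) * (z₀ * (derivative Q).eval z₀ *
          (starRingEnd ℂ) (Q.eval z₀)) := by ring
    rw [hexp, Complex.mul_conj, Complex.re_ofReal_mul, norm_mul]
    have hb : ‖a‖ ^ 2 = Complex.normSq a := Complex.sq_norm a
    have : (n / 2 : ℝ) * (‖a‖ * ‖Q.eval z₀‖) ^ 2
        = Complex.normSq a * ((n / 2 : ℝ) * ‖Q.eval z₀‖ ^ 2) := by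
      rw [← hb]; ring
    rw [this]
    exact mul_le_mul_of_nonneg_left hkey (Complex.normSq_nonneg a)
  -- bound Re by product of norms
  have hRe : (z₀ * (derivative P).eval z₀ * (starRingEnd ℂ) (P.eval z₀)).re
      ≤ ‖(derivative P).eval z₀‖ * ‖P.eval z₀‖ := by
    calc (z₀ * (derivative P).eval z₀ * (starRingEnd ℂ) (P.eval z₀)).re
        ≤ ‖z₀ * (derivative P).eval z₀ * (starRingEnd ℂ) (P.eval z₀)‖ :=
          Complex.re_le_norm _
      _ = ‖(derivative P).eval z₀‖ * ‖P.eval z₀‖ := by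
          rw [norm_mul, norm_mul, hz₀norm, one_mul, RCLike.norm_conj]
  -- so (n/2) ‖P z₀‖ ≤ ‖P' z₀‖ (when ‖P z₀‖ > 0), handle both cases
  -- sup of ‖P‖ equals ‖P z₀‖? we only need ≤
  have hsup_le : (⨆ z : Metric.closedBall (0:ℂ) 1, ‖P.eval (z : ℂ)‖) ≤ ‖P.eval z₀‖ := by
    refine ciSup_le ?_
    intro ⟨w, hw⟩
    exact hz₀max hw
  have hbdd : BddAbove (Set.range fun z : Metric.closedBall (0:ℂ) 1 =>
      ‖(derivative P).eval (z : ℂ)‖) := by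
    have hc : IsCompact (Metric.closedBall (0:ℂ) 1) := isCompact_closedBall _ _
    have := hc.bddAbove_image (f := fun z => ‖(derivative P).eval z‖)
      ((Polynomial.continuous _).norm.continuousOn)
    have hrange : (Set.range fun z : Metric.closedBall (0:ℂ) 1 =>
        ‖(derivative P).eval (z : ℂ)‖)
        = (fun z => ‖(derivative P).eval z‖) '' Metric.closedBall (0:ℂ) 1 := by
      ext x
      constructor
      · rintro ⟨⟨w, hw⟩, rfl⟩; exact ⟨w, hw, rfl⟩
      · rintro ⟨w, hw, rfl⟩; exact ⟨⟨w, hw⟩, rfl⟩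
    rw [hrange]
    exact this
  have hle_sup : ‖(derivative P).eval z₀‖ ≤
      ⨆ z : Metric.closedBall (0:ℂ) 1, ‖(derivative P).eval (z : ℂ)‖ :=
    le_ciSup hbdd ⟨z₀, hz₀mem⟩
  by_cases hzero : ‖P.eval z₀‖ = 0
  · have hsup0 : (⨆ z : Metric.closedBall (0:ℂ) 1, ‖P.eval (z : ℂ)‖) ≤ 0 := by
      rw [← hzero]; exact hsup_le
    have hn2 : (0:ℝ) ≤ (n / 2 : ℝ) := by positivity
    have hRHS : (0:ℝ) ≤ ⨆ z : Metric.closedBall (0:ℂ) 1,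
        ‖(derivative P).eval (z : ℂ)‖ :=
      le_trans (norm_nonneg _) hle_sup
    nlinarith [mul_le_mul_of_nonneg_left hsup0 hn2]
  · have hpos : 0 < ‖P.eval z₀‖ := lt_of_le_of_ne (norm_nonneg _) (Ne.symm hzero)
    have hmain : (n / 2 : ℝ) * ‖P.eval z₀‖ ≤ ‖(derivative P).eval z₀‖ := by
      have := le_trans hPkey hRe
      have h2 : (n / 2 : ℝ) * ‖P.eval z₀‖ * ‖P.eval z₀‖ ≤
          ‖(derivative P).eval z₀‖ * ‖P.eval z₀‖ := by nlinarith
      exact le_of_mul_le_mul_right h2 hpos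
    calc (n / 2 : ℝ) * (⨆ z : Metric.closedBall (0:ℂ) 1, ‖P.eval (z : ℂ)‖)
        ≤ (n / 2 : ℝ) * ‖P.eval z₀‖ := by
          apply mul_le_mul_of_nonneg_left hsup_le; positivity
      _ ≤ ‖(derivative P).eval z₀‖ := hmain
      _ ≤ _ := hle_sup
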